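/- Let κ₀, κ∞, θ ∈ ℂ and set η = −1 and κ = ((κ₀ + θ)² − κ∞²)/4. Let U ⊆ ℂ ∖ {0} be a nonempty open connected set and let f, g : U → ℂ be differentiable functions with f(t) ≠ 1 for all t ∈ U that solve the Okamoto Hamiltonian system for P_V with parameters κ₀, κ∞, θ, η = −1. Define q(t) = 1/(1 − f(t)) and p(t) = (f(t) − 1)(2(f(t) − 1)g(t) − θ − κ₀ + κ∞)/2. Then q, p are differentiable and solve the Kajiwara–Noumi–Yamada Hamiltonian system for P_V on U with parameters a₀ = 1 + (θ − κ₀ + κ∞)/2, a₁ = −κ∞, a₂ = −(θ + κ₀ − κ∞)/2, a₃ = κ₀ (which satisfy a₀ + a₁ + a₂ + a₃ = 1). -/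

import Mathlib

open Complex

/-- the change of variables `q = 1/(1 − f)`,
`p = (f − 1)(2(f − 1)g − θ − κ₀ + κ∞)/2` maps solutions of the Okamoto Hamiltonian
system for P_V (with `η = −1`) to solutions of the Kajiwara–Noumi–Yamada Hamiltonian
system for P_V with root variables `a₀ = 1 + (θ − κ₀ + κ∞)/2`, `a₁ = −κ∞`,
`a₂ = −(θ + κ₀ − κ∞)/2`, `a₃ = κ₀`. -/
theorem okamoto_to_kny_PV
    (κ₀ κoo θ η κ : ℂ) (hη : η = -1) (hκ : κ = ((κ₀ + θ) ^ 2 - κoo ^ 2) / 4)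
    (U : Set ℂ)
    (hUo : IsOpen U) (hUne : U.Nonempty) (hUc : IsPreconnected U)
    (hU0 : ∀ t ∈ U, t ≠ 0)
    (f g : ℂ → ℂ)
    (hf1 : ∀ t ∈ U, f t ≠ 1)
    (hf : ∀ t ∈ U, HasDerivAt f
      ((1 / t) * ((f t - 1) ^ 2 * (2 * f t * g t - κ₀)
        - f t * (θ * (f t - 1) + t * η))) t)
    (hg : ∀ t ∈ U, HasDerivAt g
      (-(1 / t) * (g t * ((f t - 1) * (3 * f t * g t - g t - 2 * κ₀ - θ)
        - (θ * f t + t * η)) + κ)) t)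
    (a₀ a₁ a₂ a₃ : ℂ)
    (ha₀ : a₀ = 1 + (θ - κ₀ + κoo) / 2) (ha₁ : a₁ = -κoo)
    (ha₂ : a₂ = -(θ + κ₀ - κoo) / 2) (ha₃ : a₃ = κ₀)
    (hsum : a₀ + a₁ + a₂ + a₃ = 1)
    (q p : ℂ → ℂ)
    (hq_def : ∀ t, q t = 1 / (1 - f t))
    (hp_def : ∀ t, p t = (f t - 1) * (2 * (f t - 1) * g t - θ - κ₀ + κoo) / 2) :
    ∀ t ∈ U,
      HasDerivAt q
        ((1 / t) * (q t * (q t - 1) * (2 * p t + t) - a₁ * (q t - 1) - a₃ * q t)) t ∧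
      HasDerivAt p
        ((1 / t) * (p t * (p t + t) * (1 - 2 * q t) + (a₁ + a₃) * p t - a₂ * t)) t := by
  intro t ht
  have ht0 : t ≠ 0 := hU0 t ht
  have hft : f t ≠ 1 := hf1 t ht
  have h1 : 1 - f t ≠ 0 := sub_ne_zero.mpr (Ne.symm hft)
  have hF := hf t ht
  have hG := hg t ht
  have hqfun : q = fun s => (1 - f s)⁻¹ := funext fun s => by rw [hq_def, one_div]
  have hpfun : p = fun s => (f s - 1) * (2 * (f s - 1) * g s - θ - κ₀ + κoo) / 2 :=
    funext fun s => by rw [hp_def]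
  constructor
  · have hder := hqfun ▸ (show HasDerivAt (fun s => (1 - f s)⁻¹) _ t from (hF.const_sub 1).inv h1)
    convert hder using 1
    rw [hq_def, hp_def, hη, ha₁, ha₃]
    field_simp
    ring
  · have h2 : HasDerivAt (fun s => f s - 1) _ t := hF.sub_const 1
    have h3 := (((h2.const_mul 2).mul hG).sub_const θ).sub_const κ₀ |>.add_const κoo
    have hder := hpfun ▸ ((h2.mul h3).div_const 2)
    refine hder.congr_deriv (Eq.symm ?_)
    rw [hq_def, hp_def, hη, hκ, ha₁, ha₂, ha₃]
    set_option maxHeartbeats 2000000 in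
    field_simp
    simp only [Pi.mul_apply]
    set_option maxHeartbeats 2000000 in
    ring
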